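/- The inclusion functor ι : Preglid FR → Mod oFF_Λ R admits a left adjoint κ : Mod oFF_Λ R → Preglid FR, given on objects by κ(M)(λ) = im(M(1_{λ,∞}) : M(λ) → M(∞)) for λ ∈ Λ and κ(M)(∞) = M(∞), with the unit of the adjunction given by the canonical maps M(λ) → im(M(1_{λ,∞})). -/

import Mathlib

set_option linter.unusedSectionVars false
set_option maxHeartbeats 1000000
set_option synthInstance.maxHeartbeats 1000000
set_option maxHeartbeats 2000000

noncomputable section

open CategoryTheory CategoryTheory.Limits

universe u

namespace GliderPaper

/-- A `Γ`-filtration `FR` on a unital ring `R`: additive subgroups `F γ` with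
`1 ∈ F 1`, monotone in `γ`, and multiplicative. -/
structure RingFiltration (Γ : Type u) [Group Γ] [PartialOrder Γ] (R : Type u) [Ring R] where
  F : Γ → AddSubgroup R
  one_mem : (1 : R) ∈ F 1
  mono : ∀ {α β : Γ}, α ≤ β → F α ≤ F β
  mul_mem : ∀ {α β : Γ} {a b : R}, a ∈ F α → b ∈ F β → a * b ∈ F (α * β)

variable {Γ : Type u} [Group Γ] [PartialOrder Γ]
  [CovariantClass Γ Γ (· * ·) (· ≤ ·)] [CovariantClass Γ Γ (Function.swap (· * ·)) (· ≤ ·)]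
  {R : Type u} [Ring R]

/-- Objects of the extended filtered companion category `oFF_Λ R`:
the disjoint union `Λ ⊔ {∞}`. -/
inductive OFF (FR : RingFiltration Γ R) (Λ : Set Γ) : Type u
  | of (α : Λ)
  | infty

/-- Objects of the filtered companion category `FF_Λ R`: the set `Λ`. -/
inductive FF (FR : RingFiltration Γ R) (Λ : Set Γ) : Type u
  | of (α : Λ)

variable (FR : RingFiltration Γ R) (Λ : Set Γ)

namespace OFF

/-- `le X Y` holds iff the canonical morphism `1_{X,Y}` is defined, i.e. `X ≤ Y` in `Λ`,
or `Y = ∞`. -/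
def le : OFF FR Λ → OFF FR Λ → Prop
  | of α, of β => (α : Γ) ≤ (β : Γ)
  | _, infty => True
  | infty, of _ => False

open scoped Classical in
/-- The additive subgroup of `R` of morphisms `X ⟶ Y` in `oFF_Λ R`:
`Hom(α,β) = F_{βα⁻¹}R` for `α ≤ β` in `Λ`, `Hom(X,∞) = R`, and `0` otherwise. -/
noncomputable def homGrp : OFF FR Λ → OFF FR Λ → AddSubgroup R
  | of α, of β => if (α : Γ) ≤ (β : Γ) then FR.F ((β : Γ) * (α : Γ)⁻¹) else ⊥
  | _, infty => ⊤
  | infty, of _ => ⊥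

theorem le_refl' : ∀ X : OFF FR Λ, le FR Λ X X
  | of _ => _root_.le_refl _
  | infty => trivial

theorem one_mem_homGrp : ∀ {X Y : OFF FR Λ}, le FR Λ X Y → (1 : R) ∈ homGrp FR Λ X Y
  | of α, of β, h => by
      have h' : (α : Γ) ≤ (β : Γ) := h
      have h1 : (1 : Γ) ≤ (β : Γ) * (α : Γ)⁻¹ := by
        rw [← mul_inv_cancel (α : Γ)]
        gcongr
      simpa [homGrp, if_pos h'] using FR.mono h1 FR.one_mem
  | of _, infty, _ => trivial
  | infty, infty, _ => trivial
  | infty, of _, h => h.elim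

theorem mul_mem_homGrp : ∀ {X Y Z : OFF FR Λ} {f g : R},
    f ∈ homGrp FR Λ X Y → g ∈ homGrp FR Λ Y Z → g * f ∈ homGrp FR Λ X Z := by
  intro X Y Z f g hf hg
  cases X <;> cases Y <;> cases Z <;> simp only [homGrp] at hf hg ⊢ <;> try trivial
  case of.of.of a b c =>
    by_cases hab : (a : Γ) ≤ (b : Γ)
    · by_cases hbc : (b : Γ) ≤ (c : Γ)
      · rw [if_pos hab] at hf
        rw [if_pos hbc] at hg
        rw [if_pos (le_trans hab hbc)]
        have := FR.mul_mem hg hf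
        rwa [show (c : Γ) * (b : Γ)⁻¹ * ((b : Γ) * (a : Γ)⁻¹) = (c : Γ) * (a : Γ)⁻¹ by
          group] at this
      · rw [if_neg hbc] at hg
        rw [AddSubgroup.mem_bot] at hg
        subst hg
        simp only [zero_mul]
        exact AddSubgroup.zero_mem _
    · rw [if_neg hab] at hf
      rw [AddSubgroup.mem_bot] at hf
      subst hf
      simp only [mul_zero]
      exact AddSubgroup.zero_mem _
  case of.infty.of a c =>
    rw [AddSubgroup.mem_bot] at hg
    subst hg
    simp only [zero_mul]
    exact AddSubgroup.zero_mem _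
  case infty.of.of b c =>
    rw [AddSubgroup.mem_bot] at hf
    subst hf
    simp only [mul_zero]
    exact AddSubgroup.zero_mem _
  case infty.infty.of c =>
    rw [AddSubgroup.mem_bot] at hg
    subst hg
    simp only [zero_mul]
    exact AddSubgroup.zero_mem _

instance : Category (OFF FR Λ) where
  Hom X Y := homGrp FR Λ X Y
  id X := ⟨1, one_mem_homGrp FR Λ (le_refl' FR Λ X)⟩
  comp f g := ⟨g.1 * f.1, mul_mem_homGrp FR Λ f.2 g.2⟩
  id_comp f := Subtype.ext (mul_one f.1)
  comp_id f := Subtype.ext (one_mul f.1)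
  assoc f g h := Subtype.ext (mul_assoc h.1 g.1 f.1).symm

instance : Preadditive (OFF FR Λ) where
  homGroup X Y := inferInstanceAs (AddCommGroup (homGrp FR Λ X Y))
  add_comp _ _ _ f f' g := Subtype.ext (mul_add g.1 f.1 f'.1)
  comp_add _ _ _ f g g' := Subtype.ext (add_mul g.1 g'.1 f.1)

end OFF

namespace FF

/-- The inclusion of the objects of `FF_Λ R` into those of `oFF_Λ R`. -/
def toOFF : FF FR Λ → OFF FR Λ
  | of α => .of α

instance : Category (FF FR Λ) where
  Hom X Y := OFF.homGrp FR Λ (toOFF FR Λ X) (toOFF FR Λ Y)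
  id X := ⟨1, OFF.one_mem_homGrp FR Λ (OFF.le_refl' FR Λ _)⟩
  comp f g := ⟨g.1 * f.1, OFF.mul_mem_homGrp FR Λ f.2 g.2⟩
  id_comp f := Subtype.ext (mul_one f.1)
  comp_id f := Subtype.ext (one_mul f.1)
  assoc f g h := Subtype.ext (mul_assoc h.1 g.1 f.1).symm

instance : Preadditive (FF FR Λ) where
  homGroup X Y := inferInstanceAs (AddCommGroup (OFF.homGrp FR Λ (toOFF FR Λ X) (toOFF FR Λ Y)))
  add_comp _ _ _ f f' g := Subtype.ext (mul_add g.1 f.1 f'.1)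
  comp_add _ _ _ f g g' := Subtype.ext (add_mul g.1 g'.1 f.1)

end FF

/-- The inclusion functor `j : FF_Λ R ⥤ oFF_Λ R`. -/
def jF : FF FR Λ ⥤ OFF FR Λ where
  obj := FF.toOFF FR Λ
  map f := f
  map_id _ := rfl
  map_comp _ _ := rfl

instance : (jF FR Λ).Additive := ⟨rfl⟩

/-- `Mod C`: the category of additive functors from `C` to abelian groups. -/
abbrev Mod (C : Type u) [Category.{u} C] [Preadditive C] : Type (u + 1) :=
  C ⥤+ AddCommGrpCat.{u}

/-- The component at `X` of a morphism in `Mod C`. -/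
def mapp {C : Type u} [Category.{u} C] [Preadditive C] {M N : Mod C} (f : M ⟶ N) (X : C) :
    M.obj.obj X ⟶ N.obj.obj X :=
  f.hom.app X

/-- The canonical morphism `1_{X,Y}` in `oFF_Λ R`, given by `1_R`. -/
def unitHom (X Y : OFF FR Λ) (h : OFF.le FR Λ X Y) : X ⟶ Y :=
  ⟨1, OFF.one_mem_homGrp FR Λ h⟩

/-- The canonical morphism `1_{α,β}` in `FF_Λ R`, given by `1_R`. -/
def unitHomFF (α β : Λ) (h : (α : Γ) ≤ (β : Γ)) : (FF.of α : FF FR Λ) ⟶ FF.of β :=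
  unitHom FR Λ (.of α) (.of β) h

/-- A module `M` over `oFF_Λ R` is a preglider if all the maps `M(1_{X,Y})` are injective. -/
def IsPreglider (M : Mod (OFF FR Λ)) : Prop :=
  ∀ (X Y : OFF FR Λ) (h : OFF.le FR Λ X Y), Function.Injective (M.obj.map (unitHom FR Λ X Y h))

/-- A module `M` over `FF_Λ R` is a prefragment if all the maps `M(1_{α,β})` are injective. -/
def IsPrefragment (M : Mod (FF FR Λ)) : Prop :=
  ∀ (α β : Λ) (h : (α : Γ) ≤ (β : Γ)), Function.Injective (M.obj.map (unitHomFF FR Λ α β h))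

/-- The category of pregliders: the full subcategory of `Mod (oFF_Λ R)` of pregliders. -/
abbrev Preglid : Type (u + 1) :=
  ObjectProperty.FullSubcategory (fun M : Mod (OFF FR Λ) => IsPreglider FR Λ M)

instance : Preadditive (Preglid FR Λ) := Preadditive.inducedCategory _

/-- The category of prefragments: the full subcategory of `Mod (FF_Λ R)` of prefragments. -/
abbrev Prefrag : Type (u + 1) :=
  ObjectProperty.FullSubcategory (fun M : Mod (FF FR Λ) => IsPrefragment FR Λ M)

instance : Preadditive (Prefrag FR Λ) := Preadditive.inducedCategory _

/-- The inclusion `Preglid FR Λ ⥤ Mod (oFF_Λ R)`. -/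
def iotaF : Preglid FR Λ ⥤ Mod (OFF FR Λ) := ObjectProperty.ι _

/-- The inclusion `Prefrag FR Λ ⥤ Mod (FF_Λ R)`. -/
def etaF : Prefrag FR Λ ⥤ Mod (FF FR Λ) := ObjectProperty.ι _

/-- The component at `X` of a morphism of pregliders. -/
def pgapp {M N : Preglid FR Λ} (f : M ⟶ N) (X : OFF FR Λ) :
    M.obj.obj.obj X ⟶ N.obj.obj.obj X :=
  mapp f.hom X

/-- The component at `X` of a morphism of prefragments. -/
def pfapp {M N : Prefrag FR Λ} (f : M ⟶ N) (X : FF FR Λ) :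
    M.obj.obj.obj X ⟶ N.obj.obj.obj X :=
  mapp f.hom X

/-- The class `Σ` of morphisms of pregliders all of whose components at objects of `Λ`
are isomorphisms. -/
def SigmaClass : MorphismProperty (Preglid FR Λ) :=
  fun _ _ f => ∀ α : Λ, IsIso (pgapp FR Λ f (.of α))

/-- The category of glider representations: the localization of `Preglid FR Λ` at `Σ`. -/
abbrev Glid : Type (u + 1) := (SigmaClass FR Λ).Localization

/-- The localization functor `Q : Preglid FR Λ ⥤ Glid FR Λ`. -/
def QF : Preglid FR Λ ⥤ Glid FR Λ := (SigmaClass FR Λ).Q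

/-- The restriction functor `j^* : Mod (oFF_Λ R) ⥤ Mod (FF_Λ R)`. -/
def jStar : Mod (OFF FR Λ) ⥤ Mod (FF FR Λ) where
  obj M := ⟨jF FR Λ ⋙ M.obj, by haveI : M.obj.Additive := M.property; exact (inferInstance : (jF FR Λ ⋙ M.obj).Additive)⟩
  map {M N} f := ObjectProperty.homMk (Functor.whiskerLeft (jF FR Λ) f.hom)
  map_id _ := rfl
  map_comp _ _ := rfl

theorem isPrefragment_jStar (M : Mod (OFF FR Λ)) (hM : IsPreglider FR Λ M) :
    IsPrefragment FR Λ ((jStar FR Λ).obj M) :=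
  fun α β h => hM (.of α) (.of β) h

/-- The restriction functor `j^* : Preglid FR Λ ⥤ Prefrag FR Λ`. -/
def jRes : Preglid FR Λ ⥤ Prefrag FR Λ where
  obj M := ⟨(jStar FR Λ).obj M.obj, isPrefragment_jStar FR Λ M.obj M.property⟩
  map f := ObjectProperty.homMk ((jStar FR Λ).map f.hom)
  map_id M := ObjectProperty.hom_ext _ ((jStar FR Λ).map_id M.obj)
  map_comp f g := ObjectProperty.hom_ext _ ((jStar FR Λ).map_comp f.hom g.hom)

theorem sigma_isInvertedBy : (SigmaClass FR Λ).IsInvertedBy (jRes FR Λ) := by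
  intro M N f hf
  rw [← ObjectProperty.isIso_hom_iff, ← ObjectProperty.isIso_hom_iff]
  haveI : ∀ X : FF FR Λ, IsIso (((jRes FR Λ).map f).hom.hom.app X) := by
    rintro ⟨α⟩
    have h := hf α
    first
      | exact h
      | (simp only [pgapp, mapp] at h; exact h)
      | (simp only [pgapp, mapp, jRes, jStar, ObjectProperty.homMk_hom, Functor.whiskerLeft_app] at h ⊢; exact h)
      | (simp only [pgapp, mapp, jRes, jStar, jF, FF.toOFF] at h ⊢; exact h)
      | (simp only [pgapp, mapp] at h; convert h using 2)
  exact NatIso.isIso_of_isIso_app _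

/-- The canonical fully faithful functor `φ : Glid FR Λ ⥤ Prefrag FR Λ`,
the unique functor with `Q ⋙ φ = j^*`. -/
def phiF : Glid FR Λ ⥤ Prefrag FR Λ :=
  Localization.Construction.lift (jRes FR Λ) (sigma_isInvertedBy FR Λ)

theorem phiF_fac : QF FR Λ ⋙ phiF FR Λ = jRes FR Λ :=
  Localization.Construction.fac _ _


section Statements

variable {Γ : Type u} [Group Γ] [PartialOrder Γ]
  [CovariantClass Γ Γ (· * ·) (· ≤ ·)] [CovariantClass Γ Γ (Function.swap (· * ·)) (· ≤ ·)]
  {R : Type u} [Ring R]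

variable (FR : RingFiltration Γ R) (Λ : Set Γ)

theorem leInfty (X : OFF FR Λ) : OFF.le FR Λ X .infty := by cases X <;> trivial

variable {FR Λ} in
/-- The element of `R` underlying a morphism of `oFF_Λ R`. -/
def homVal {X Y : OFF FR Λ} (f : X ⟶ Y) : R := f.1

variable {FR Λ} in
theorem homVal_id (X : OFF FR Λ) : homVal (𝟙 X) = (1 : R) := rfl

variable {FR Λ} in
theorem homVal_comp {X Y Z : OFF FR Λ} (f : X ⟶ Y) (g : Y ⟶ Z) :
    homVal (f ≫ g) = homVal g * homVal f := rfl

/-- The endomorphism of `∞` in `oFF_Λ R` given by `r : R`. -/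
def inftyHom (r : R) : (OFF.infty : OFF FR Λ) ⟶ OFF.infty :=
  ⟨r, AddSubgroup.mem_top r⟩

theorem inftyHom_one : inftyHom FR Λ (1 : R) = 𝟙 (OFF.infty : OFF FR Λ) := rfl

theorem unit_comp_inftyHom {X Y : OFF FR Λ} (f : X ⟶ Y) :
    unitHom FR Λ X .infty (leInfty FR Λ X) ≫ inftyHom FR Λ f.1 =
      f ≫ unitHom FR Λ Y .infty (leInfty FR Λ Y) :=
  Subtype.ext ((mul_one f.1).trans (one_mul f.1).symm)

variable {FR Λ} in
/-- The canonical map `M(X) → M(∞)`. -/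
def toInf (M : Mod (OFF FR Λ)) (X : OFF FR Λ) :
    M.obj.obj X ⟶ M.obj.obj OFF.infty :=
  M.obj.map (unitHom FR Λ X .infty (leInfty FR Λ X))

variable {FR Λ} in
/-- The subgroup of `M(∞)` corresponding to the object `X` in `κ(M)`. -/
def ksub (M : Mod (OFF FR Λ)) : OFF FR Λ → AddSubgroup (M.obj.obj OFF.infty)
  | .of α => AddMonoidHom.range (toInf M (.of α)).hom
  | .infty => ⊤

variable {FR Λ} in
theorem toInf_mem (M : Mod (OFF FR Λ)) (X : OFF FR Λ) (m : M.obj.obj X) :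
    toInf M X m ∈ ksub M X := by
  cases X with
  | of α => exact ⟨m, rfl⟩
  | infty => trivial

variable {FR Λ} in
theorem ext_maps (M : Mod (OFF FR Λ)) {X Y : OFF FR Λ} (f : X ⟶ Y)
    {x : M.obj.obj OFF.infty} (hx : x ∈ ksub M X) :
    M.obj.map (inftyHom FR Λ f.1) x ∈ ksub M Y := by
  cases Y with
  | infty => trivial
  | of β =>
    cases X with
    | of α =>
      obtain ⟨m, hm⟩ := hx
      refine ⟨M.obj.map f m, ?_⟩
      rw [← hm]
      have h : M.obj.map
            (unitHom FR Λ (OFF.of α) .infty (leInfty FR Λ _) ≫ inftyHom FR Λ f.1) m =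
          M.obj.map (f ≫ unitHom FR Λ (OFF.of β) .infty (leInfty FR Λ _)) m := by
        rw [unit_comp_inftyHom]
      simpa [toInf, Functor.map_comp, comp_apply] using h.symm
    | infty =>
      haveI := M.property
      have hf : f.1 = 0 := AddSubgroup.mem_bot.mp f.2
      have hz : inftyHom FR Λ f.1 = 0 := by
        rw [hf]; exact Subtype.ext rfl
      rw [hz, Functor.map_zero]
      simpa using zero_mem (ksub M (OFF.of β))

variable {FR Λ} in
/-- The action of a morphism `f : X ⟶ Y` on the subgroups `ksub`. -/
def kmap (M : Mod (OFF FR Λ)) {X Y : OFF FR Λ} (f : X ⟶ Y) :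
    ↥(ksub M X) →+ ↥(ksub M Y) :=
  AddMonoidHom.codRestrict
    ((M.obj.map (inftyHom FR Λ f.1)).hom.comp (ksub M X).subtype) _
    (fun x => ext_maps M f x.2)

variable {FR Λ} in
theorem kmap_val (M : Mod (OFF FR Λ)) {X Y : OFF FR Λ} (f : X ⟶ Y) (x : ↥(ksub M X)) :
    (kmap M f x).1 = M.obj.map (inftyHom FR Λ f.1) x.1 := rfl

variable {FR Λ} in
/-- The functor underlying `κ(M)`. -/
def kappaObj (M : Mod (OFF FR Λ)) : OFF FR Λ ⥤ AddCommGrpCat.{u} where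
  obj X := AddCommGrpCat.of (ksub M X)
  map f := AddCommGrpCat.ofHom (kmap M f)
  map_id X := by
    ext x
    show M.obj.map (inftyHom FR Λ (homVal (𝟙 X))) x.1 = x.1
    rw [show inftyHom FR Λ (homVal (𝟙 X)) = 𝟙 OFF.infty from rfl, M.obj.map_id]
    rfl
  map_comp f g := by
    ext x
    show M.obj.map (inftyHom FR Λ (homVal (f ≫ g))) x.1
        = M.obj.map (inftyHom FR Λ (homVal g)) (M.obj.map (inftyHom FR Λ (homVal f)) x.1)
    rw [show inftyHom FR Λ (homVal (f ≫ g)) = inftyHom FR Λ (homVal f) ≫ inftyHom FR Λ (homVal g) from rfl,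
      M.obj.map_comp]
    rfl

variable {FR Λ} in
instance kappaObj_additive (M : Mod (OFF FR Λ)) : (kappaObj M).Additive where
  map_add := by
    intro X Y f g
    haveI := M.property
    ext x
    refine Subtype.ext ?_
    show M.obj.map (inftyHom FR Λ (homVal (f + g))) x.1
        = M.obj.map (inftyHom FR Λ (homVal f)) x.1 + M.obj.map (inftyHom FR Λ (homVal g)) x.1
    rw [show inftyHom FR Λ (homVal (f + g)) = inftyHom FR Λ (homVal f) + inftyHom FR Λ (homVal g) from rfl,
      Functor.map_add]
    rfl

variable {FR Λ} in
/-- `κ(M)` as an object of `Mod (oFF_Λ R)`. -/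
def kappaMod (M : Mod (OFF FR Λ)) : Mod (OFF FR Λ) := ⟨kappaObj M, kappaObj_additive M⟩

variable {FR Λ} in
theorem kappa_isPreglider (M : Mod (OFF FR Λ)) : IsPreglider FR Λ (kappaMod M) := by
  rintro X Y h (a : ksub M X) (b : ksub M X) hab
  have hval : M.obj.map (inftyHom FR Λ (homVal (unitHom FR Λ X Y h))) a.1 =
      M.obj.map (inftyHom FR Λ (homVal (unitHom FR Λ X Y h))) b.1 := congrArg Subtype.val hab
  rw [show inftyHom FR Λ (homVal (unitHom FR Λ X Y h)) = 𝟙 OFF.infty from rfl,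
    M.obj.map_id] at hval
  exact Subtype.ext hval

variable {FR Λ} in
theorem mapp_infty_mem {M N : Mod (OFF FR Λ)} (φ : M ⟶ N) (X : OFF FR Λ)
    {x : M.obj.obj OFF.infty} (hx : x ∈ ksub M X) : mapp φ OFF.infty x ∈ ksub N X := by
  cases X with
  | infty => trivial
  | of α =>
    obtain ⟨m, hm⟩ := hx
    refine ⟨mapp φ (OFF.of α) m, ?_⟩
    rw [← hm]
    have h := congrArg
      (fun (g : M.obj.obj (OFF.of α) ⟶ N.obj.obj OFF.infty) => g m)
      (φ.hom.naturality
        (unitHom FR Λ (OFF.of α) .infty (leInfty FR Λ _)))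
    exact h.symm

variable {FR Λ} in
/-- The component at `X` of `κ(φ)`. -/
def kappaMapApp {M N : Mod (OFF FR Λ)} (φ : M ⟶ N) (X : OFF FR Λ) :
    ↥(ksub M X) →+ ↥(ksub N X) :=
  AddMonoidHom.codRestrict
    ((mapp φ OFF.infty).hom.comp (ksub M X).subtype) _
    (fun x => mapp_infty_mem φ X x.2)

variable {FR Λ} in
theorem kappaMapApp_val {M N : Mod (OFF FR Λ)} (φ : M ⟶ N) (X : OFF FR Λ)
    (x : ↥(ksub M X)) : (kappaMapApp φ X x).1 = mapp φ OFF.infty x.1 := rfl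

variable {FR Λ} in
/-- The left adjoint `κ : Mod (oFF_Λ R) ⥤ Preglid FR Λ`. -/
def kappaF : Mod (OFF FR Λ) ⥤ Preglid FR Λ where
  obj M := ⟨kappaMod M, kappa_isPreglider M⟩
  map {M N} φ :=
    ObjectProperty.homMk (ObjectProperty.homMk
    { app := fun X => AddCommGrpCat.ofHom (kappaMapApp φ X)
      naturality := fun X Y f => by
        ext x
        refine Subtype.ext ?_
        have h := congrArg
          (fun (g : M.obj.obj OFF.infty ⟶ N.obj.obj OFF.infty) => g x.1)
          (φ.hom.naturality (inftyHom FR Λ f.1))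
        exact h })
  map_id M := by
    refine ObjectProperty.hom_ext _ (ObjectProperty.hom_ext _ (NatTrans.ext (funext fun X => ?_)))
    ext x
    exact Subtype.ext rfl
  map_comp φ ψ := by
    refine ObjectProperty.hom_ext _ (ObjectProperty.hom_ext _ (NatTrans.ext (funext fun X => ?_)))
    ext x
    exact Subtype.ext rfl

variable {FR Λ} in
/-- The unit component `M ⟶ ι(κ(M))`. -/
def unitNat (M : Mod (OFF FR Λ)) : M.obj ⟶ (kappaMod M).obj where
  app X := AddCommGrpCat.ofHom
    (AddMonoidHom.codRestrict (toInf M X).hom _ (fun m => toInf_mem M X m))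
  naturality := fun X Y f => by
    ext m
    refine Subtype.ext ?_
    show toInf M Y (M.obj.map f m) = M.obj.map (inftyHom FR Λ f.1) (toInf M X m)
    have h' : M.obj.map (unitHom FR Λ X .infty (leInfty FR Λ X) ≫ inftyHom FR Λ f.1) m
        = M.obj.map (f ≫ unitHom FR Λ Y .infty (leInfty FR Λ Y)) m := by
      rw [unit_comp_inftyHom]
    rw [M.obj.map_comp, M.obj.map_comp] at h'
    exact h'.symm

variable {FR Λ} in
/-- The unit of the adjunction `κ ⊣ ι`. -/
def kappaUnit : 𝟭 (Mod (OFF FR Λ)) ⟶ kappaF ⋙ iotaF FR Λ where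
  app M := ObjectProperty.homMk (unitNat M)
  naturality := fun M N φ => by
    refine ObjectProperty.hom_ext _ <| NatTrans.ext (funext fun X => ?_)
    ext m
    refine Subtype.ext ?_
    show toInf N X (mapp φ X m) = mapp φ OFF.infty (toInf M X m)
    have h := congrArg (fun (g : M.obj.obj X ⟶ N.obj.obj OFF.infty) => g m)
      (φ.hom.naturality (unitHom FR Λ X .infty (leInfty FR Λ X)))
    exact h.symm

variable {FR Λ} in
/-- The counit components. -/
def counitApp (P : Preglid FR Λ) : (X : OFF FR Λ) → (↥(ksub P.obj X) →+ P.obj.obj.obj X)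
  | .of α => show ↥(AddMonoidHom.range (toInf P.obj (.of α)).hom) →+ _ from (AddMonoidHom.ofInjective
      (P.property (.of α) .infty (leInfty FR Λ _))).symm.toAddMonoidHom
  | .infty => show ↥(⊤ : AddSubgroup (P.obj.obj.obj OFF.infty)) →+ _ from (⊤ : AddSubgroup (P.obj.obj.obj OFF.infty)).subtype

variable {FR Λ} in
theorem counitApp_spec (P : Preglid FR Λ) (X : OFF FR Λ) (x : ↥(ksub P.obj X)) :
    toInf P.obj X (counitApp P X x) = x.1 := by
  cases X with
  | infty =>
    show P.obj.obj.map (unitHom FR Λ .infty .infty (leInfty FR Λ _)) x.1 = x.1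
    rw [show unitHom FR Λ OFF.infty .infty (leInfty FR Λ _) = 𝟙 OFF.infty from rfl,
      P.obj.obj.map_id]
    rfl
  | of α =>
    set hinj := P.property (OFF.of α) .infty (leInfty FR Λ _)
    set e := AddMonoidHom.ofInjective hinj with he
    have h1 : (↑(e (e.symm x)) : P.obj.obj.obj OFF.infty)
        = toInf P.obj (OFF.of α) (e.symm x) := AddMonoidHom.ofInjective_apply hinj
    have h2 : e (e.symm x) = x := e.apply_symm_apply x
    rw [h2] at h1
    exact h1.symm

variable {FR Λ} in
/-- The counit component `κ(ι(P)) ⟶ P`. -/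
def counitNat (P : Preglid FR Λ) : (kappaMod P.obj).obj ⟶ P.obj.obj where
  app X := AddCommGrpCat.ofHom (counitApp P X)
  naturality := fun X Y f => by
    ext x
    apply P.property Y .infty (leInfty FR Λ Y)
    show toInf P.obj Y (counitApp P Y (kmap P.obj f x))
        = toInf P.obj Y (P.obj.obj.map f (counitApp P X x))
    have h1 : toInf P.obj Y (counitApp P Y (kmap P.obj f x))
        = P.obj.obj.map (inftyHom FR Λ f.1) x.1 := counitApp_spec P Y _
    have h3 : P.obj.obj.map (f ≫ unitHom FR Λ Y .infty (leInfty FR Λ Y)) (counitApp P X x)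
        = P.obj.obj.map (unitHom FR Λ X .infty (leInfty FR Λ X) ≫ inftyHom FR Λ f.1)
            (counitApp P X x) := by
      rw [unit_comp_inftyHom]
    rw [P.obj.obj.map_comp, P.obj.obj.map_comp] at h3
    have h4 : toInf P.obj X (counitApp P X x) = x.1 := counitApp_spec P X x
    have h2 : toInf P.obj Y (P.obj.obj.map f (counitApp P X x))
        = P.obj.obj.map (inftyHom FR Λ f.1) x.1 :=
      h3.trans (congrArg (fun y => P.obj.obj.map (inftyHom FR Λ f.1) y) h4)
    exact h1.trans h2.symm

variable {FR Λ} in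
/-- The counit of the adjunction `κ ⊣ ι`. -/
def kappaCounit : iotaF FR Λ ⋙ kappaF ⟶ 𝟭 (Preglid FR Λ) where
  app P := ObjectProperty.homMk (ObjectProperty.homMk (counitNat P))
  naturality := fun P Q ψ => by
    refine ObjectProperty.hom_ext _ (ObjectProperty.hom_ext _ (NatTrans.ext (funext fun X => ?_)))
    ext x
    apply Q.property X .infty (leInfty FR Λ X)
    show toInf Q.obj X (counitApp Q X (kappaMapApp ψ.hom X x))
        = toInf Q.obj X (mapp ψ.hom X (counitApp P X x))
    have h1 : toInf Q.obj X (counitApp Q X (kappaMapApp ψ.hom X x))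
        = mapp ψ.hom OFF.infty x.1 := counitApp_spec Q X _
    have hn := congrArg
      (fun (g : P.obj.obj.obj X ⟶ Q.obj.obj.obj OFF.infty) => g (counitApp P X x))
      (ψ.hom.hom.naturality
        (unitHom FR Λ X .infty (leInfty FR Λ X)))
    have h4 : toInf P.obj X (counitApp P X x) = x.1 := counitApp_spec P X x
    have h2 : toInf Q.obj X (mapp ψ.hom X (counitApp P X x)) = mapp ψ.hom OFF.infty x.1 := by
      refine Eq.trans ?_ (congrArg (fun y => mapp ψ.hom OFF.infty y) h4)
      exact hn.symm
    exact h1.trans h2.symm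

variable {FR Λ} in
/-- The adjunction `κ ⊣ ι`. -/
def kappaAdj : kappaF ⊣ iotaF FR Λ where
  unit := kappaUnit
  counit := kappaCounit
  left_triangle_components M := by
    refine ObjectProperty.hom_ext _ (ObjectProperty.hom_ext _ (NatTrans.ext (funext fun X => ?_)))
    ext x
    apply kappa_isPreglider M X .infty (leInfty FR Λ X)
    refine (counitApp_spec ⟨kappaMod M, kappa_isPreglider M⟩ X _).trans ?_
    refine Subtype.ext ?_
    show M.obj.map (unitHom FR Λ OFF.infty .infty (leInfty FR Λ _)) x.1
        = M.obj.map (inftyHom FR Λ (homVal (unitHom FR Λ X .infty (leInfty FR Λ X)))) x.1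
    rw [show unitHom FR Λ OFF.infty .infty (leInfty FR Λ _) = 𝟙 OFF.infty from rfl,
      show inftyHom FR Λ (homVal (unitHom FR Λ X .infty (leInfty FR Λ X)))
        = 𝟙 OFF.infty from rfl]
  right_triangle_components P := by
    refine ObjectProperty.hom_ext _ (NatTrans.ext (funext fun X => ?_))
    ext m
    apply P.property X .infty (leInfty FR Λ X)
    exact counitApp_spec P X _

/-- The inclusion `ι : Preglid FR ⥤ Mod oFF_Λ R` admits a left adjoint
`κ` given on objects by `κ(M)(λ) = im(M(1_{λ,∞}) : M(λ) → M(∞))` and `κ(M)(∞) = M(∞)`,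
with the unit of the adjunction given by the canonical maps `M(λ) → im(M(1_{λ,∞}))`.
This is expressed by: the unit is bijective at `∞`, surjective at every `λ ∈ Λ`, and
under the identification at `∞` the subobject `κ(M)(λ) ⊆ κ(M)(∞)` corresponds exactly to
the image of `M(1_{λ,∞})` (which pins down `κ(M)(λ)` as that image, with the unit the
canonical corestriction). -/
theorem statement_4 (FR : RingFiltration Γ R) (Λ : Set Γ) :
    ∃ (κ : Mod (OFF FR Λ) ⥤ Preglid FR Λ) (adj : κ ⊣ iotaF FR Λ),
      ∀ M : Mod (OFF FR Λ),
        Function.Bijective (mapp (adj.unit.app M) OFF.infty) ∧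
        (∀ α : Λ, Function.Surjective (mapp (adj.unit.app M) (OFF.of α))) ∧
        (∀ α : Λ,
          Set.range (fun x : M.obj.obj (OFF.of α) =>
            mapp (adj.unit.app M) OFF.infty
              (M.obj.map (unitHom FR Λ (OFF.of α) OFF.infty trivial) x)) =
          Set.range ((κ.obj M).obj.obj.map
            (unitHom FR Λ (OFF.of α) OFF.infty trivial))) := by
  refine ⟨kappaF, kappaAdj, fun M => ⟨⟨?_, ?_⟩, ?_, ?_⟩⟩
  · -- injectivity at ∞
    intro a b hab
    have h : M.obj.map (𝟙 OFF.infty) a = M.obj.map (𝟙 OFF.infty) b :=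
      congrArg Subtype.val hab
    rw [M.obj.map_id] at h
    simpa using h
  · -- surjectivity at ∞
    intro y
    refine ⟨y.1, Subtype.ext ?_⟩
    show M.obj.map (𝟙 OFF.infty) y.1 = y.1
    rw [M.obj.map_id]
    rfl
  · -- surjectivity at α
    intro α y
    obtain ⟨m, hm⟩ := y.2
    exact ⟨m, Subtype.ext hm⟩
  · -- range identification
    intro α
    ext z
    constructor
    · rintro ⟨m, rfl⟩
      refine ⟨⟨toInf M (OFF.of α) m, ⟨m, rfl⟩⟩, ?_⟩
      refine Subtype.ext ?_
      show M.obj.map (inftyHom FR Λ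
          (homVal (unitHom FR Λ (OFF.of α) OFF.infty trivial))) (toInf M (OFF.of α) m)
        = M.obj.map (unitHom FR Λ OFF.infty OFF.infty (leInfty FR Λ _))
            (M.obj.map (unitHom FR Λ (OFF.of α) OFF.infty trivial) m)
      rw [show inftyHom FR Λ (homVal (unitHom FR Λ (OFF.of α) OFF.infty trivial))
            = 𝟙 OFF.infty from rfl,
        show unitHom FR Λ OFF.infty OFF.infty (leInfty FR Λ _) = 𝟙 OFF.infty from rfl,
        M.obj.map_id]
      rfl
    · rintro ⟨x, rfl⟩
      obtain ⟨m, hm⟩ := x.2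
      refine ⟨m, ?_⟩
      refine Subtype.ext ?_
      show M.obj.map (unitHom FR Λ OFF.infty OFF.infty (leInfty FR Λ _))
          (M.obj.map (unitHom FR Λ (OFF.of α) OFF.infty trivial) m)
        = M.obj.map (inftyHom FR Λ
            (homVal (unitHom FR Λ (OFF.of α) OFF.infty trivial))) x.1
      rw [show unitHom FR Λ OFF.infty OFF.infty (leInfty FR Λ _) = 𝟙 OFF.infty from rfl,
        show inftyHom FR Λ (homVal (unitHom FR Λ (OFF.of α) OFF.infty trivial))
          = 𝟙 OFF.infty from rfl, M.obj.map_id]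
      exact hm

end Statements

end GliderPaper
end
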